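/- Lemma 5.3 (decay of mollified density and tail): Let π be a finite Borel measure on [0,∞) with ∫₀^∞ x dπ(x) < ∞ and fix ε > 0. Define f^{π,ε}(x) := ∫₀^∞ G_ε(x,y) dπ(y) and F^{π,ε}(x) := ∫_x^∞ f^{π,ε}(z) dz. Then both f^{π,ε}(x) and F^{π,ε}(x) are o(1/x) as x → ∞, i.e. x·f^{π,ε}(x) → 0 and x·F^{π,ε}(x) → 0 as x → ∞. -/

import Mathlib

open MeasureTheory Set Filter Topology

/-- The Gaussian kernel `p_ε(x) = (2πε)^{-1/2} exp(-x²/(2ε))`. -/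
noncomputable def pker (ε x : ℝ) : ℝ :=
  (Real.sqrt (2 * Real.pi * ε))⁻¹ * Real.exp (-(x ^ 2) / (2 * ε))

/-- The Dirichlet heat kernel on the half-line `G_ε(x,y) = p_ε(x-y) - p_ε(x+y)`. -/
noncomputable def Gker (ε x y : ℝ) : ℝ := pker ε (x - y) - pker ε (x + y)

namespace MollAux

lemma pker_nonneg (ε x : ℝ) : 0 ≤ pker ε x := by
  unfold pker; positivity

lemma pker_cont (ε : ℝ) : Continuous (pker ε) := by
  unfold pker; fun_prop

lemma pker_mono {ε : ℝ} (hε : 0 < ε) {u v : ℝ} (h : |v| ≤ |u|) : pker ε u ≤ pker ε v := by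
  unfold pker
  have h2 : v ^ 2 ≤ u ^ 2 := by
    rw [← sq_abs v, ← sq_abs u]
    exact pow_le_pow_left₀ (abs_nonneg v) h 2
  gcongr

lemma pker_le_K {ε : ℝ} (hε : 0 < ε) (x : ℝ) :
    pker ε x ≤ (Real.sqrt (2 * Real.pi * ε))⁻¹ := by
  have := pker_mono hε (u := x) (v := 0) (by simp)
  simpa [pker] using this

lemma pker_eq (ε : ℝ) :
    pker ε = fun x => (Real.sqrt (2 * Real.pi * ε))⁻¹ * Real.exp (-(1 / (2 * ε)) * x ^ 2) := by
  funext x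
  unfold pker
  congr 1
  ring

lemma pker_integrable {ε : ℝ} (hε : 0 < ε) : Integrable (pker ε) := by
  rw [pker_eq]
  exact (integrable_exp_neg_mul_sq (by positivity)).const_mul _

lemma pker_integral {ε : ℝ} (hε : 0 < ε) : ∫ x, pker ε x = 1 := by
  rw [pker_eq]
  rw [MeasureTheory.integral_const_mul, integral_gaussian]
  have h1 : Real.pi / (1 / (2 * ε)) = 2 * Real.pi * ε := by
    field_simp
  rw [h1]
  exact inv_mul_cancel₀ (ne_of_gt (Real.sqrt_pos.2 (by positivity)))

/-- The Gaussian tail `T ε a = ∫_{Ici a} p_ε`. -/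
noncomputable def Tk (ε a : ℝ) : ℝ := ∫ u in Ici a, pker ε u

lemma Tk_nonneg (ε a : ℝ) : 0 ≤ Tk ε a :=
  setIntegral_nonneg measurableSet_Ici fun u _ => pker_nonneg ε u

lemma Tk_antitone {ε : ℝ} (hε : 0 < ε) : Antitone (Tk ε) := by
  intro a b hab
  exact setIntegral_mono_set (pker_integrable hε).integrableOn
    (Eventually.of_forall fun u => pker_nonneg ε u)
    (HasSubset.Subset.eventuallyLE (Ici_subset_Ici.2 hab))

lemma Tk_le_one {ε : ℝ} (hε : 0 < ε) (a : ℝ) : Tk ε a ≤ 1 := by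
  rw [← pker_integral hε]
  exact setIntegral_le_integral (pker_integrable hε)
    (Eventually.of_forall fun u => pker_nonneg ε u)

lemma integral_exp_neg_mul_Ioi {c : ℝ} (hc : 0 < c) (a : ℝ) :
    ∫ u in Ioi a, Real.exp (-(c * u)) = Real.exp (-(c * a)) / c := by
  have hderiv : ∀ x ∈ Ici a,
      HasDerivAt (fun u => -(Real.exp (-(c * u)) / c)) (Real.exp (-(c * x))) x := by
    intro x _
    have h1 : HasDerivAt (fun u : ℝ => -(c * u)) (-c) x := by
      simpa using ((hasDerivAt_id x).const_mul c).fun_neg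
    have h2 := (Real.hasDerivAt_exp (-(c * x))).comp x h1
    have h3 := (h2.div_const c).fun_neg
    refine h3.congr_deriv ?_
    rw [mul_neg, neg_div, neg_neg, mul_div_assoc, div_self hc.ne', mul_one]
  have hint : IntegrableOn (fun u => Real.exp (-(c * u))) (Ioi a) := by
    simpa [neg_mul] using exp_neg_integrableOn_Ioi a hc
  have htend : Tendsto (fun u => -(Real.exp (-(c * u)) / c)) atTop (𝓝 0) := by
    have hlin : Tendsto (fun u : ℝ => -(c * u)) atTop atBot :=
      tendsto_neg_atBot_iff.mpr (Tendsto.const_mul_atTop hc tendsto_id)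
    have := (Real.tendsto_exp_atBot.comp hlin).div_const c
    simpa using this.neg
  have := integral_Ioi_of_hasDerivAt_of_tendsto' hderiv hint htend
  rw [this]
  ring


lemma tendsto_mul_pker {ε : ℝ} (hε : 0 < ε) :
    Tendsto (fun x => x * pker ε (x / 2)) atTop (𝓝 0) := by
  set K := (Real.sqrt (2 * Real.pi * ε))⁻¹ with hK
  have hK0 : 0 ≤ K := by positivity
  have base : Tendsto (fun x : ℝ => x * Real.exp (-x)) atTop (𝓝 0) := by
    have := tendsto_rpow_mul_exp_neg_mul_atTop_nhds_zero 1 1 one_pos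
    refine this.congr' ?_
    filter_upwards [eventually_gt_atTop 0] with x hx
    rw [Real.rpow_one, neg_one_mul]
  have hg : Tendsto (fun x : ℝ => K * (x * Real.exp (-x))) atTop (𝓝 0) := by
    simpa using base.const_mul K
  apply squeeze_zero_norm' ?_ hg
  filter_upwards [eventually_ge_atTop (max (8 * ε) 1)] with x hx
  have hx1 : (1 : ℝ) ≤ x := le_trans (le_max_right _ _) hx
  have hx8 : 8 * ε ≤ x := le_trans (le_max_left _ _) hx
  have hx0 : 0 < x := lt_of_lt_of_le one_pos hx1
  have hexp : -((x / 2) ^ 2) / (2 * ε) ≤ -x := by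
    rw [div_le_iff₀ (by positivity)]
    nlinarith
  have hb : pker ε (x / 2) ≤ K * Real.exp (-x) := by
    unfold pker
    rw [← hK]
    gcongr
  rw [Real.norm_eq_abs, abs_of_nonneg (mul_nonneg hx0.le (pker_nonneg ε (x / 2)))]
  calc x * pker ε (x / 2) ≤ x * (K * Real.exp (-x)) := by
        exact mul_le_mul_of_nonneg_left hb hx0.le
    _ = K * (x * Real.exp (-x)) := by ring

lemma tendsto_mul_Tk {ε : ℝ} (hε : 0 < ε) :
    Tendsto (fun a => a * Tk ε a) atTop (𝓝 0) := by
  set K := (Real.sqrt (2 * Real.pi * ε))⁻¹ with hK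
  have hK0 : 0 ≤ K := by positivity
  have hg : Tendsto (fun a : ℝ => K * (2 * ε) * Real.exp (-(a / (2 * ε)))) atTop (𝓝 0) := by
    have hlin : Tendsto (fun a : ℝ => -(a / (2 * ε))) atTop atBot :=
      tendsto_neg_atBot_iff.mpr (Tendsto.atTop_div_const (by positivity) tendsto_id)
    simpa using (Real.tendsto_exp_atBot.comp hlin).const_mul (K * (2 * ε))
  apply squeeze_zero_norm' ?_ hg
  filter_upwards [eventually_ge_atTop 1] with a ha
  have ha0 : 0 < a := lt_of_lt_of_le one_pos ha
  have hc : 0 < a / (2 * ε) := by positivity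
  -- pointwise bound on the kernel on `Ici a`
  have hTb : Tk ε a ≤ K * (Real.exp (-(a / (2 * ε) * a)) / (a / (2 * ε))) := by
    have hmono : Tk ε a ≤ ∫ u in Ici a, K * Real.exp (-(a / (2 * ε) * u)) := by
      apply setIntegral_mono_on (pker_integrable hε).integrableOn ?_ measurableSet_Ici ?_
      · rw [integrableOn_Ici_iff_integrableOn_Ioi]
        refine Integrable.const_mul ?_ K
        simpa [neg_mul, IntegrableOn] using exp_neg_integrableOn_Ioi a hc
      · intro u hu
        have hu' : a ≤ u := hu
        have h1 : a / (2 * ε) * u ≤ u ^ 2 / (2 * ε) := by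
          rw [div_mul_eq_mul_div, div_le_div_iff_of_pos_right (by positivity)]
          nlinarith
        unfold pker
        rw [← hK]
        gcongr
        rw [neg_div]
        exact neg_le_neg h1
    have hval : ∫ u in Ici a, K * Real.exp (-(a / (2 * ε) * u))
        = K * (Real.exp (-(a / (2 * ε) * a)) / (a / (2 * ε))) := by
      rw [integral_Ici_eq_integral_Ioi, MeasureTheory.integral_const_mul]
      congr 1
      exact integral_exp_neg_mul_Ioi hc a
    linarith [hmono.trans_eq hval]
  rw [Real.norm_eq_abs, abs_of_nonneg (mul_nonneg ha0.le (Tk_nonneg ε a))]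
  have h2 : a * Tk ε a ≤ K * (2 * ε) * Real.exp (-(a / (2 * ε) * a)) := by
    have := mul_le_mul_of_nonneg_left hTb ha0.le
    calc a * Tk ε a ≤ a * (K * (Real.exp (-(a / (2 * ε) * a)) / (a / (2 * ε)))) := this
      _ = K * (2 * ε) * Real.exp (-(a / (2 * ε) * a)) := by
          field_simp
  refine h2.trans ?_
  gcongr K * (2 * ε) * Real.exp ?_
  exact neg_le_neg (le_mul_of_one_le_right hc.le ha)

end MollAux

open MollAux

/-- Lemma 5.3 (decay of mollified density and tail): if `π` is a finite Borel
measure on `[0,∞)` with finite first moment and `ε > 0`, then both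
`f^{π,ε}(x) = ∫₀^∞ G_ε(x,y) dπ(y)` and its tail integral
`F^{π,ε}(x) = ∫_x^∞ f^{π,ε}(z) dz` are `o(1/x)` as `x → ∞`. -/
theorem mollified_density_and_tail_decay
    (π : Measure ℝ) [IsFiniteMeasure π] (hsupp : π (Iio 0) = 0)
    (hmom : Integrable (fun x => x) π) (ε : ℝ) (hε : 0 < ε) :
    Tendsto (fun x => x * ∫ y, Gker ε x y ∂π) atTop (𝓝 0) ∧
    Tendsto (fun x => x * ∫ z in Ici x, ∫ y, Gker ε z y ∂π) atTop (𝓝 0) := by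
  set K := (Real.sqrt (2 * Real.pi * ε))⁻¹ with hK
  have hK0 : 0 ≤ K := by positivity
  -- a.e. nonnegativity of points
  have haey : ∀ᵐ y ∂π, 0 ≤ y := by
    rw [ae_iff]
    simp only [not_le]
    exact hsupp
  -- tail moment tends to zero
  have hm0 : Tendsto (fun a => ∫ y in Ioi a, y ∂π) atTop (𝓝 0) := by
    have heq : ∀ a : ℝ, ∫ y in Ioi a, y ∂π = ∫ y, (Ioi a).indicator (fun y => y) y ∂π :=
      fun a => (integral_indicator measurableSet_Ioi).symm
    simp_rw [heq]
    have h0 : (0 : ℝ) = ∫ y, (fun _ : ℝ => (0 : ℝ)) y ∂π := by simp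
    rw [h0]
    apply tendsto_integral_filter_of_dominated_convergence (fun y => |y|)
    · exact Eventually.of_forall fun a =>
        hmom.aestronglyMeasurable.indicator measurableSet_Ioi
    · refine Eventually.of_forall fun a => Eventually.of_forall fun y => ?_
      simpa [Real.norm_eq_abs] using norm_indicator_le_norm_self (fun y : ℝ => y) y (s := Ioi a)
    · exact hmom.abs
    · refine Eventually.of_forall fun y => ?_
      have hev : (fun a => (Ioi a).indicator (fun y : ℝ => y) y) =ᶠ[atTop] (fun _ => 0) := by
        filter_upwards [eventually_ge_atTop y] with a ha
        exact indicator_of_notMem (by simpa using ha) _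
      exact Tendsto.congr' hev.symm tendsto_const_nhds
  -- Markov-type bound
  have hmarkov : ∀ x : ℝ, 0 < x →
      (x / 2) * (π (Ioi (x / 2))).toReal ≤ ∫ y in Ioi (x / 2), y ∂π := by
    intro x hx
    have h1 : ∫ y in Ioi (x / 2), (x / 2) ∂π ≤ ∫ y in Ioi (x / 2), y ∂π :=
      setIntegral_mono_on (integrableOn_const (measure_ne_top π _))
        hmom.integrableOn measurableSet_Ioi (fun y hy => (mem_Ioi.1 hy).le)
    calc (x / 2) * (π (Ioi (x / 2))).toReal
        = ∫ _ in Ioi (x / 2), (x / 2) ∂π := by rw [setIntegral_const, smul_eq_mul, mul_comm, measureReal_def]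
      _ ≤ _ := h1
  have htoReal : ∀ s : Set ℝ, (π s).toReal ≤ (π univ).toReal := fun s =>
    ENNReal.toReal_mono (measure_ne_top π _) (measure_mono (subset_univ s))
  constructor
  · -- Part 1
    apply squeeze_zero_norm'
      (a := fun x => (π univ).toReal * (x * pker ε (x / 2))
        + (2 * K) * ∫ y in Ioi (x / 2), y ∂π)
    · filter_upwards [eventually_ge_atTop 1] with x hx
      have hx0 : 0 < x := lt_of_lt_of_le one_pos hx
      set g := fun y : ℝ => pker ε (x - y) with hg
      have hgi : Integrable g π := by
        refine Integrable.mono' (integrable_const K) ?_ (Eventually.of_forall fun y => ?_)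
        · exact ((pker_cont ε).comp (continuous_const.sub continuous_id)).aestronglyMeasurable
        · rw [hg, Real.norm_eq_abs, abs_of_nonneg (pker_nonneg ε _)]
          exact pker_le_K hε _
      have hnorm : ‖∫ y, Gker ε x y ∂π‖ ≤ ∫ y, g y ∂π := by
        apply norm_integral_le_of_norm_le hgi
        filter_upwards [haey] with y hy
        have h1 : pker ε (x + y) ≤ pker ε (x - y) := by
          apply pker_mono hε
          rw [abs_of_nonneg (show (0:ℝ) ≤ x + y by linarith)]
          exact abs_le.2 ⟨by linarith, by linarith⟩
        rw [Real.norm_eq_abs]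
        unfold Gker
        rw [abs_of_nonneg (sub_nonneg.2 h1)]
        have := pker_nonneg ε (x + y)
        simp only [hg]
        linarith
      have hsplit : ∫ y, g y ∂π
          = (∫ y in Iic (x / 2), g y ∂π) + ∫ y in Ioi (x / 2), g y ∂π := by
        rw [← compl_Iic]
        exact (integral_add_compl measurableSet_Iic hgi).symm
      have hb1 : ∫ y in Iic (x / 2), g y ∂π ≤ pker ε (x / 2) * (π univ).toReal := by
        calc ∫ y in Iic (x / 2), g y ∂π ≤ ∫ _ in Iic (x / 2), pker ε (x / 2) ∂π := by
              apply setIntegral_mono_on hgi.integrableOn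
                (integrableOn_const (measure_ne_top π _)) measurableSet_Iic
              intro y hy
              have hy' : y ≤ x / 2 := hy
              apply pker_mono hε
              rw [abs_of_nonneg (by linarith : (0:ℝ) ≤ x / 2),
                abs_of_nonneg (by linarith : (0:ℝ) ≤ x - y)]
              linarith
          _ = (π (Iic (x / 2))).toReal * pker ε (x / 2) := by
              rw [setIntegral_const, smul_eq_mul, measureReal_def]
          _ ≤ (π univ).toReal * pker ε (x / 2) :=
              mul_le_mul_of_nonneg_right (htoReal _) (pker_nonneg ε _)
          _ = pker ε (x / 2) * (π univ).toReal := mul_comm _ _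
      have hb2 : ∫ y in Ioi (x / 2), g y ∂π ≤ K * (π (Ioi (x / 2))).toReal := by
        calc ∫ y in Ioi (x / 2), g y ∂π ≤ ∫ _ in Ioi (x / 2), K ∂π := by
              apply setIntegral_mono_on hgi.integrableOn
                (integrableOn_const (measure_ne_top π _)) measurableSet_Ioi
              intro y _
              exact pker_le_K hε _
          _ = K * (π (Ioi (x / 2))).toReal := by
              rw [setIntegral_const, smul_eq_mul, mul_comm, measureReal_def]
      have hIoi0 : (0:ℝ) ≤ (π (Ioi (x / 2))).toReal := ENNReal.toReal_nonneg
      have hmark := hmarkov x hx0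
      calc ‖x * ∫ y, Gker ε x y ∂π‖ = x * ‖∫ y, Gker ε x y ∂π‖ := by
            rw [norm_mul, Real.norm_of_nonneg hx0.le]
        _ ≤ x * ((∫ y in Iic (x / 2), g y ∂π) + ∫ y in Ioi (x / 2), g y ∂π) := by
            rw [← hsplit]
            exact mul_le_mul_of_nonneg_left hnorm hx0.le
        _ ≤ x * (pker ε (x / 2) * (π univ).toReal) + x * (K * (π (Ioi (x / 2))).toReal) := by
            rw [mul_add]
            exact add_le_add (mul_le_mul_of_nonneg_left hb1 hx0.le)
              (mul_le_mul_of_nonneg_left hb2 hx0.le)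
        _ ≤ (π univ).toReal * (x * pker ε (x / 2))
            + (2 * K) * ∫ y in Ioi (x / 2), y ∂π := by
            apply add_le_add (le_of_eq (by ring))
            nlinarith
    · have h1 : Tendsto (fun x => (π univ).toReal * (x * pker ε (x / 2))) atTop (𝓝 0) := by
        simpa using (tendsto_mul_pker hε).const_mul (π univ).toReal
      have h2 : Tendsto (fun x : ℝ => (2 * K) * ∫ y in Ioi (x / 2), y ∂π) atTop (𝓝 0) := by
        have := hm0.comp (Tendsto.atTop_div_const two_pos tendsto_id)
        simpa using this.const_mul (2 * K)
      simpa using h1.add h2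
  · -- Part 2
    apply squeeze_zero_norm'
      (a := fun x => (π univ).toReal * (x * Tk ε (x / 2))
        + 2 * ∫ y in Ioi (x / 2), y ∂π)
    · filter_upwards [eventually_ge_atTop 1] with x hx
      have hx0 : 0 < x := lt_of_lt_of_le one_pos hx
      -- integrability of the translated kernels on the product
      have hprod : ∀ c : ℝ → ℝ → ℝ,
          Continuous (fun p : ℝ × ℝ => c p.1 p.2) →
          (∀ y : ℝ, (∫⁻ z, (‖c z y‖₊ : ENNReal) ∂(volume.restrict (Ici x))) ≤ 1) →
          Integrable (fun p : ℝ × ℝ => c p.1 p.2) ((volume.restrict (Ici x)).prod π) := by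
        intro c hc hbound
        refine ⟨hc.aestronglyMeasurable, ?_⟩
        have hmeas : AEMeasurable (fun p : ℝ × ℝ => (‖c p.1 p.2‖₊ : ENNReal))
            ((volume.restrict (Ici x)).prod π) :=
          (hc.measurable.nnnorm.coe_nnreal_ennreal).aemeasurable
        show ∫⁻ p, (‖c p.1 p.2‖₊ : ENNReal) ∂((volume.restrict (Ici x)).prod π) < ⊤
        rw [lintegral_prod_symm _ hmeas]
        calc ∫⁻ y, ∫⁻ z, (‖c z y‖₊ : ENNReal) ∂(volume.restrict (Ici x)) ∂π
            ≤ ∫⁻ _, 1 ∂π := lintegral_mono fun y => hbound y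
          _ = π univ := by simp
          _ < ⊤ := measure_lt_top π _
      have hker1 : ∀ y : ℝ, ∫⁻ u, (‖pker ε u‖₊ : ENNReal) ∂volume = 1 := by
        intro y
        have : ∫⁻ u, (‖pker ε u‖₊ : ENNReal) ∂volume
            = ∫⁻ u, ENNReal.ofReal (pker ε u) ∂volume := by
          apply lintegral_congr fun u => ?_
          rw [← enorm_eq_nnnorm, Real.enorm_eq_ofReal (pker_nonneg ε u)]
        rw [this, ← ofReal_integral_eq_lintegral_ofReal (pker_integrable hε)
          (Eventually.of_forall fun u => pker_nonneg ε u), pker_integral hε,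
          ENNReal.ofReal_one]
      have hP1 : Integrable (fun p : ℝ × ℝ => pker ε (p.1 - p.2))
          ((volume.restrict (Ici x)).prod π) := by
        refine hprod (fun z y => pker ε (z - y))
          ((pker_cont ε).comp (continuous_fst.sub continuous_snd)) fun y => ?_
        calc ∫⁻ z, (‖pker ε (z - y)‖₊ : ENNReal) ∂(volume.restrict (Ici x))
            ≤ ∫⁻ z, (‖pker ε (z - y)‖₊ : ENNReal) ∂volume :=
              lintegral_mono' Measure.restrict_le_self le_rfl
          _ = ∫⁻ u, (‖pker ε u‖₊ : ENNReal) ∂volume :=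
              lintegral_sub_right_eq_self (fun u => (‖pker ε u‖₊ : ENNReal)) y
          _ = 1 := hker1 y
      have hP2 : Integrable (fun p : ℝ × ℝ => pker ε (p.1 + p.2))
          ((volume.restrict (Ici x)).prod π) := by
        refine hprod (fun z y => pker ε (z + y))
          ((pker_cont ε).comp (continuous_fst.add continuous_snd)) fun y => ?_
        calc ∫⁻ z, (‖pker ε (z + y)‖₊ : ENNReal) ∂(volume.restrict (Ici x))
            ≤ ∫⁻ z, (‖pker ε (z + y)‖₊ : ENNReal) ∂volume :=
              lintegral_mono' Measure.restrict_le_self le_rfl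
          _ = ∫⁻ u, (‖pker ε u‖₊ : ENNReal) ∂volume :=
              lintegral_add_right_eq_self (fun u => (‖pker ε u‖₊ : ENNReal)) y
          _ = 1 := hker1 y
      have hGint : Integrable (Function.uncurry (fun z y => Gker ε z y))
          ((volume.restrict (Ici x)).prod π) := by
        have : Function.uncurry (fun z y => Gker ε z y)
            = fun p : ℝ × ℝ => pker ε (p.1 - p.2) - pker ε (p.1 + p.2) := rfl
        rw [this]
        exact hP1.sub hP2
      have hswap : ∫ z in Ici x, ∫ y, Gker ε z y ∂π
          = ∫ y, (∫ z in Ici x, Gker ε z y) ∂π :=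
        integral_integral_swap hGint
      -- inner integral computation
      have hinner : ∀ y : ℝ, (∫ z in Ici x, Gker ε z y) = Tk ε (x - y) - Tk ε (x + y) := by
        intro y
        have hi1 : IntegrableOn (fun z => pker ε (z - y)) (Ici x) :=
          ((pker_integrable hε).comp_sub_right y).integrableOn
        have hi2 : IntegrableOn (fun z => pker ε (z + y)) (Ici x) :=
          ((pker_integrable hε).comp_add_right y).integrableOn
        have h1 : ∫ z in Ici x, pker ε (z - y) = Tk ε (x - y) := by
          rw [← integral_indicator measurableSet_Ici]
          unfold Tk
          rw [← integral_indicator measurableSet_Ici]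
          have heq : ∀ z : ℝ, (Ici x).indicator (fun z => pker ε (z - y)) z
              = (Ici (x - y)).indicator (pker ε) (z - y) := by
            intro z
            simp only [indicator_apply, mem_Ici, sub_le_sub_iff_right]
          simp_rw [heq]
          exact integral_sub_right_eq_self (fun u => (Ici (x - y)).indicator (pker ε) u) y
        have h2 : ∫ z in Ici x, pker ε (z + y) = Tk ε (x + y) := by
          rw [← integral_indicator measurableSet_Ici]
          unfold Tk
          rw [← integral_indicator measurableSet_Ici]
          have heq : ∀ z : ℝ, (Ici x).indicator (fun z => pker ε (z + y)) z
              = (Ici (x + y)).indicator (pker ε) (z + y) := by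
            intro z
            simp only [indicator_apply, mem_Ici, add_le_add_iff_right]
          simp_rw [heq]
          exact integral_add_right_eq_self (fun u => (Ici (x + y)).indicator (pker ε) u) y
        unfold Gker
        rw [integral_sub hi1 hi2, h1, h2]
      have hHmeas : Measurable (fun y => Tk ε (x - y) - Tk ε (x + y)) := by
        have hTm : Measurable (Tk ε) := (Tk_antitone hε).measurable
        exact (hTm.comp (measurable_const.sub measurable_id)).sub
          (hTm.comp (measurable_const.add measurable_id))
      have hH : Integrable (fun y => Tk ε (x - y) - Tk ε (x + y)) π := by
        refine Integrable.mono' (integrable_const 1) hHmeas.aestronglyMeasurable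
          (Eventually.of_forall fun y => ?_)
        rw [Real.norm_eq_abs, abs_le]
        constructor
        · linarith [Tk_le_one hε (x + y), Tk_nonneg ε (x - y)]
        · linarith [Tk_le_one hε (x - y), Tk_nonneg ε (x + y)]
      have hrw : ∫ z in Ici x, ∫ y, Gker ε z y ∂π
          = ∫ y, (Tk ε (x - y) - Tk ε (x + y)) ∂π := by
        rw [hswap]
        exact integral_congr_ae (Eventually.of_forall fun y => hinner y)
      -- bounds
      have hb0 : ‖∫ y, (Tk ε (x - y) - Tk ε (x + y)) ∂π‖
          ≤ ∫ y, ‖Tk ε (x - y) - Tk ε (x + y)‖ ∂π :=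
        norm_integral_le_integral_norm _
      have hsplit : ∫ y, ‖Tk ε (x - y) - Tk ε (x + y)‖ ∂π
          = (∫ y in Iic (x / 2), ‖Tk ε (x - y) - Tk ε (x + y)‖ ∂π)
            + ∫ y in Ioi (x / 2), ‖Tk ε (x - y) - Tk ε (x + y)‖ ∂π := by
        rw [← compl_Iic]
        exact (integral_add_compl measurableSet_Iic hH.norm).symm
      have hb1 : ∫ y in Iic (x / 2), ‖Tk ε (x - y) - Tk ε (x + y)‖ ∂π
          ≤ Tk ε (x / 2) * (π univ).toReal := by
        calc ∫ y in Iic (x / 2), ‖Tk ε (x - y) - Tk ε (x + y)‖ ∂π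
            ≤ ∫ _ in Iic (x / 2), Tk ε (x / 2) ∂π := by
              apply setIntegral_mono_ae_restrict hH.norm.integrableOn
                (integrableOn_const (measure_ne_top π _))
              filter_upwards [ae_restrict_of_ae haey, ae_restrict_mem measurableSet_Iic]
                with y hy hys
              have hys' : y ≤ x / 2 := hys
              have e1 : Tk ε (x + y) ≤ Tk ε (x - y) := Tk_antitone hε (by linarith)
              have e2 : Tk ε (x - y) ≤ Tk ε (x / 2) := Tk_antitone hε (by linarith)
              rw [Real.norm_eq_abs, abs_of_nonneg (by linarith)]
              linarith [Tk_nonneg ε (x + y)]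
          _ = (π (Iic (x / 2))).toReal * Tk ε (x / 2) := by
              rw [setIntegral_const, smul_eq_mul, measureReal_def]
          _ ≤ (π univ).toReal * Tk ε (x / 2) :=
              mul_le_mul_of_nonneg_right (htoReal _) (Tk_nonneg ε _)
          _ = Tk ε (x / 2) * (π univ).toReal := mul_comm _ _
      have hb2 : ∫ y in Ioi (x / 2), ‖Tk ε (x - y) - Tk ε (x + y)‖ ∂π
          ≤ (π (Ioi (x / 2))).toReal := by
        calc ∫ y in Ioi (x / 2), ‖Tk ε (x - y) - Tk ε (x + y)‖ ∂π
            ≤ ∫ _ in Ioi (x / 2), (1 : ℝ) ∂π := by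
              apply setIntegral_mono_on hH.norm.integrableOn
                (integrableOn_const (measure_ne_top π _)) measurableSet_Ioi
              intro y _
              rw [Real.norm_eq_abs, abs_le]
              constructor
              · linarith [Tk_le_one hε (x + y), Tk_nonneg ε (x - y)]
              · linarith [Tk_le_one hε (x - y), Tk_nonneg ε (x + y)]
          _ = (π (Ioi (x / 2))).toReal := by
              rw [setIntegral_const, smul_eq_mul, mul_one, measureReal_def]
      have hIoi0 : (0:ℝ) ≤ (π (Ioi (x / 2))).toReal := ENNReal.toReal_nonneg
      have hmark := hmarkov x hx0
      calc ‖x * ∫ z in Ici x, ∫ y, Gker ε z y ∂π‖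
          = x * ‖∫ y, (Tk ε (x - y) - Tk ε (x + y)) ∂π‖ := by
            rw [hrw, norm_mul, Real.norm_of_nonneg hx0.le]
        _ ≤ x * ((∫ y in Iic (x / 2), ‖Tk ε (x - y) - Tk ε (x + y)‖ ∂π)
              + ∫ y in Ioi (x / 2), ‖Tk ε (x - y) - Tk ε (x + y)‖ ∂π) := by
            rw [← hsplit]
            exact mul_le_mul_of_nonneg_left hb0 hx0.le
        _ ≤ x * (Tk ε (x / 2) * (π univ).toReal) + x * (π (Ioi (x / 2))).toReal := by
            rw [mul_add]
            exact add_le_add (mul_le_mul_of_nonneg_left hb1 hx0.le)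
              (mul_le_mul_of_nonneg_left hb2 hx0.le)
        _ ≤ (π univ).toReal * (x * Tk ε (x / 2)) + 2 * ∫ y in Ioi (x / 2), y ∂π := by
            apply add_le_add (le_of_eq (by ring))
            nlinarith
    · have h1 : Tendsto (fun x => (π univ).toReal * (x * Tk ε (x / 2))) atTop (𝓝 0) := by
        have hcomp := (tendsto_mul_Tk hε).comp (Tendsto.atTop_div_const two_pos tendsto_id)
        have h3 := hcomp.const_mul (2 : ℝ)
        rw [mul_zero] at h3
        have h2 : Tendsto (fun x : ℝ => x * Tk ε (x / 2)) atTop (𝓝 0) := by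
          apply h3.congr
          intro x
          simp only [Function.comp_apply, id_eq]
          ring
        simpa using h2.const_mul (π univ).toReal
      have h2 : Tendsto (fun x : ℝ => 2 * ∫ y in Ioi (x / 2), y ∂π) atTop (𝓝 0) := by
        have := hm0.comp (Tendsto.atTop_div_const two_pos tendsto_id)
        simpa using this.const_mul (2 : ℝ)
      simpa using h1.add h2
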